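/- Let P, Q be symmetric matrices with P positive semidefinite, and suppose x'Qx > 0 for all nonzero x with Px = 0. Then there exists c̄ > 0 such that Q + cP is positive definite for all c ≥ c̄. -/

import Mathlib

open Matrix

/-- if `P ⪰ 0`, `Q` symmetric, and `xᵀQx > 0` for every nonzero
`x` with `Px = 0`, then `Q + cP ≻ 0` for all sufficiently large `c`. -/
theorem stmt12 (n : ℕ) (P Q : Matrix (Fin n) (Fin n) ℝ)
    (hP : P.PosSemidef) (hQ : Q.IsHermitian)
    (h : ∀ x : Fin n → ℝ, x ≠ 0 → P *ᵥ x = 0 → 0 < x ⬝ᵥ (Q *ᵥ x)) :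
    ∃ cbar > (0 : ℝ), ∀ c ≥ cbar, (Q + c • P).PosDef := by
  classical
  set f : (Fin n → ℝ) → ℝ := fun x => x ⬝ᵥ (Q *ᵥ x) with hfdef
  set g : (Fin n → ℝ) → ℝ := fun x => x ⬝ᵥ (P *ᵥ x) with hgdef
  have hfc : Continuous f := continuous_id.dotProduct (continuous_const.matrix_mulVec continuous_id)
  have hgc : Continuous g := continuous_id.dotProduct (continuous_const.matrix_mulVec continuous_id)
  have hg0 : ∀ x, 0 ≤ g x := fun x => by
    have := hP.re_dotProduct_nonneg x
    simpa using this
  set S : Set (Fin n → ℝ) := Metric.sphere 0 1 ∩ {x | f x ≤ 0} with hSdef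
  have hScomp : IsCompact S :=
    (isCompact_sphere 0 1).inter_right (isClosed_le hfc continuous_const)
  have hSg : ∀ x ∈ S, 0 < g x := by
    intro x hx
    obtain ⟨hx1, hx2⟩ := hx
    have hxn : ‖x‖ = 1 := mem_sphere_zero_iff_norm.mp hx1
    have hx0 : x ≠ 0 := by intro h0; simp [h0] at hxn
    rcases lt_or_eq_of_le (hg0 x) with hlt | heq
    · exact hlt
    · exfalso
      have hPx : P *ᵥ x = 0 := by
        have := (hP.dotProduct_mulVec_zero_iff x).mp (by simpa using heq.symm)
        exact this
      exact absurd (h x hx0 hPx) (not_lt.mpr hx2)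
  have key : ∃ cbar > (0:ℝ), ∀ c ≥ cbar, ∀ x : Fin n → ℝ, ‖x‖ = 1 → 0 < f x + c * g x := by
    by_cases hne : S.Nonempty
    · obtain ⟨x0, hx0S, hx0min⟩ := hScomp.exists_isMinOn hne hgc.continuousOn
      obtain ⟨x1, hx1S, hx1min⟩ := hScomp.exists_isMinOn hne hfc.continuousOn
      have hm : 0 < g x0 := hSg x0 hx0S
      refine ⟨max 1 ((1 - f x1) / g x0), lt_of_lt_of_le one_pos (le_max_left _ _), ?_⟩
      intro c hc x hx
      by_cases hxS : f x ≤ 0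
      · have hxmem : x ∈ S := ⟨mem_sphere_zero_iff_norm.mpr hx, hxS⟩
        have h1 : g x0 ≤ g x := hx0min hxmem
        have h2 : f x1 ≤ f x := hx1min hxmem
        have hc1 : (1 - f x1) / g x0 ≤ c := le_trans (le_max_right _ _) hc
        have hc0 : 0 < c := lt_of_lt_of_le one_pos (le_trans (le_max_left _ _) hc)
        have : 1 - f x1 ≤ c * g x0 := by
          rw [div_le_iff₀ hm] at hc1; linarith
        nlinarith [hg0 x]
      · push_neg at hxS
        have hc0 : 0 < c := lt_of_lt_of_le one_pos (le_trans (le_max_left _ _) hc)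
        nlinarith [hg0 x]
    · refine ⟨1, one_pos, ?_⟩
      intro c hc x hx
      have hxS : ¬ f x ≤ 0 := by
        intro hle
        exact hne ⟨x, mem_sphere_zero_iff_norm.mpr hx, hle⟩
      push_neg at hxS
      nlinarith [hg0 x]
  obtain ⟨cbar, hcbar, hkey⟩ := key
  refine ⟨cbar, hcbar, fun c hc => ?_⟩
  rw [posDef_iff_dotProduct_mulVec]
  constructor
  · have hcP : (c • P).IsHermitian := by
      have hPt : Pᵀ = P := by
        have := hP.1.eq
        simpa [Matrix.conjTranspose_eq_transpose_of_trivial] using this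
      simp [Matrix.IsHermitian, hPt]
    exact hQ.add hcP
  · intro x hx
    have hxn : (0:ℝ) < ‖x‖ := norm_pos_iff.mpr hx
    set y : Fin n → ℝ := ‖x‖⁻¹ • x with hydef
    have hyn : ‖y‖ = 1 := by
      rw [hydef, norm_smul, norm_inv, norm_norm, inv_mul_cancel₀ (ne_of_gt hxn)]
    have hy := hkey c hc y hyn
    have hxy : x = ‖x‖ • y := by
      rw [hydef, smul_smul, mul_inv_cancel₀ (ne_of_gt hxn), one_smul]
    have expand : star x ⬝ᵥ ((Q + c • P) *ᵥ x) = ‖x‖^2 * (f y + c * g y) := by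
      conv_lhs => rw [hxy]
      simp only [star_trivial, add_mulVec, mulVec_smul, smul_mulVec,
        dotProduct_add, dotProduct_smul, smul_dotProduct, smul_eq_mul, hfdef, hgdef]
      ring
    rw [expand]
    positivity
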